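/- arXiv:1401.0133 — 2 statements merged into one kernel-verified Lean document; each statement's English description precedes it below -/
import Mathlib

section
/- For the Finsler space with F² = e^{−x2} y1 (y2³+y3³+y4³)^{1/3} on {y2 ≠ 0, y4 ≠ 0}, a horizontal vector W = W^i h_i satisfies W^j R̊^i_{hjk} = 0 for all h,i,k (where R̊ is the h-curvature of the Berwald connection) if and only if W² = W³ = W⁴ = 0; i.e., the nullity space N_{R̊} is exactly the span of h₁. -/
open scoped BigOperators

/-- Partial derivative of `f` with respect to the `j`-th coordinate at `v`. -/
noncomputable def pd {n : ℕ} (f : (Fin n → ℝ) → ℝ) (j : Fin n) (v : Fin n → ℝ) : ℝ :=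
  deriv (fun t => f (Function.update v j t)) (v j)

/-- The open set `U`: `y2 ≠ 0`, `y4 ≠ 0`. -/
def U (x y : Fin 4 → ℝ) : Prop := y 1 ≠ 0 ∧ y 3 ≠ 0

/-- The Barthel connection coefficients `N^i_j` of `F² = e^{−x2} y1 (y2³+y3³+y4³)^{1/3}`. -/
noncomputable def NB (x y : Fin 4 → ℝ) : Fin 4 → Fin 4 → ℝ := fun i j =>
  (!![0, 0, 0, 0;
      0, -(4 * (y 1) ^ 3 + (y 2) ^ 3 + (y 3) ^ 3) / (4 * (y 1) ^ 2),
        (3 / 4) * (y 2) ^ 2 / (y 1), (3 / 4) * (y 3) ^ 2 / (y 1);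
      0, -(3 / 4) * (y 2), -(3 / 4) * (y 1), 0;
      0, -(3 / 4) * (y 3), 0, -(3 / 4) * (y 1)] : Matrix (Fin 4) (Fin 4) ℝ) i j

/-- The curvature of the Barthel connection, `ℜ^i_{jk} = δ_j N^i_k − δ_k N^i_j`, where
`δ_k = ∂/∂x^k − N^m_k ∂/∂y^m`. -/
noncomputable def Rg (x y : Fin 4 → ℝ) (i j k : Fin 4) : ℝ :=
  (pd (fun x' => NB x' y i k) j x - ∑ m, NB x y m j * pd (fun y' => NB x y' i k) m y)
    - (pd (fun x' => NB x' y i j) k x - ∑ m, NB x y m k * pd (fun y' => NB x y' i j) m y)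

/-- The h-curvature of the Berwald connection, `R̊^i_{hjk} = ∂̇_h ℜ^i_{jk}`. -/
noncomputable def Rb (x y : Fin 4 → ℝ) (i h j k : Fin 4) : ℝ :=
  pd (fun y' => Rg x y' i j k) h y

-- pd of constant-in-x
lemma pd_x_NB (x y : Fin 4 → ℝ) (i k j : Fin 4) :
    pd (fun x' => NB x' y i k) j x = 0 := by
  have h : (fun t => NB (Function.update x j t) y i k) = fun _ => NB x y i k := rfl
  unfold pd; rw [h]; exact deriv_const _ _

lemma deriv_lin (c s : ℝ) : deriv (fun t => c * t) s = c := by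
  simpa using ((hasDerivAt_id s).const_mul c).deriv

lemma pd_coord_mul (c : ℝ) (r m : Fin 4) (y : Fin 4 → ℝ) :
    pd (fun y' => c * y' r) m y = if m = r then c else 0 := by
  unfold pd
  rcases eq_or_ne m r with h | h
  · subst h
    simp only [Function.update_self, if_pos rfl]
    exact deriv_lin c (y m)
  · rw [if_neg h]
    simp only [Function.update_of_ne h.symm]
    exact deriv_const _ _

lemma pd_const {n : ℕ} (c : ℝ) (m : Fin n) (y : Fin n → ℝ) :
    pd (fun _ => c) m y = 0 := deriv_const _ _

-- pd of NB rows 2 and 3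
lemma pd_NB20 (x y : Fin 4 → ℝ) (m : Fin 4) : pd (fun y' => NB x y' 2 0) m y = 0 := by
  have h : (fun y' : Fin 4 → ℝ => NB x y' 2 0) = fun _ => (0:ℝ) := by
    funext y'; simp [NB, Matrix.vecHead, Matrix.vecTail]
  rw [h]; exact pd_const _ _ _

lemma pd_NB21 (x y : Fin 4 → ℝ) (m : Fin 4) :
    pd (fun y' => NB x y' 2 1) m y = if m = 2 then -(3/4) else 0 := by
  have h : (fun y' : Fin 4 → ℝ => NB x y' 2 1) = fun y' => (-(3/4)) * y' 2 := by
    funext y'; simp [NB, Matrix.vecHead, Matrix.vecTail]; try ring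
  rw [h]; exact pd_coord_mul _ _ _ _

lemma pd_NB22 (x y : Fin 4 → ℝ) (m : Fin 4) :
    pd (fun y' => NB x y' 2 2) m y = if m = 1 then -(3/4) else 0 := by
  have h : (fun y' : Fin 4 → ℝ => NB x y' 2 2) = fun y' => (-(3/4)) * y' 1 := by
    funext y'; simp [NB, Matrix.vecHead, Matrix.vecTail]; try ring
  rw [h]; exact pd_coord_mul _ _ _ _

lemma pd_NB23 (x y : Fin 4 → ℝ) (m : Fin 4) : pd (fun y' => NB x y' 2 3) m y = 0 := by
  have h : (fun y' : Fin 4 → ℝ => NB x y' 2 3) = fun _ => (0:ℝ) := by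
    funext y'; simp [NB, Matrix.vecHead, Matrix.vecTail]
  rw [h]; exact pd_const _ _ _

lemma pd_NB30 (x y : Fin 4 → ℝ) (m : Fin 4) : pd (fun y' => NB x y' 3 0) m y = 0 := by
  have h : (fun y' : Fin 4 → ℝ => NB x y' 3 0) = fun _ => (0:ℝ) := by
    funext y'; simp [NB, Matrix.vecHead, Matrix.vecTail]
  rw [h]; exact pd_const _ _ _

lemma pd_NB31 (x y : Fin 4 → ℝ) (m : Fin 4) :
    pd (fun y' => NB x y' 3 1) m y = if m = 3 then -(3/4) else 0 := by
  have h : (fun y' : Fin 4 → ℝ => NB x y' 3 1) = fun y' => (-(3/4)) * y' 3 := by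
    funext y'; simp [NB, Matrix.vecHead, Matrix.vecTail]; try ring
  rw [h]; exact pd_coord_mul _ _ _ _

lemma pd_NB32 (x y : Fin 4 → ℝ) (m : Fin 4) : pd (fun y' => NB x y' 3 2) m y = 0 := by
  have h : (fun y' : Fin 4 → ℝ => NB x y' 3 2) = fun _ => (0:ℝ) := by
    funext y'; simp [NB, Matrix.vecHead, Matrix.vecTail]
  rw [h]; exact pd_const _ _ _

lemma pd_NB33 (x y : Fin 4 → ℝ) (m : Fin 4) :
    pd (fun y' => NB x y' 3 3) m y = if m = 1 then -(3/4) else 0 := by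
  have h : (fun y' : Fin 4 → ℝ => NB x y' 3 3) = fun y' => (-(3/4)) * y' 1 := by
    funext y'; simp [NB, Matrix.vecHead, Matrix.vecTail]; try ring
  rw [h]; exact pd_coord_mul _ _ _ _

-- NB column 0 vanishes
lemma NB_col0 (x y : Fin 4 → ℝ) (i : Fin 4) : NB x y i 0 = 0 := by
  fin_cases i <;> simp [NB, Matrix.vecHead, Matrix.vecTail]

lemma pd_NB_col0 (x y : Fin 4 → ℝ) (i m : Fin 4) : pd (fun y' => NB x y' i 0) m y = 0 := by
  have h : (fun y' : Fin 4 → ℝ => NB x y' i 0) = fun _ => (0:ℝ) := by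
    funext y'; exact NB_col0 x y' i
  rw [h]; exact pd_const _ _ _

lemma Rg_j0 (x y : Fin 4 → ℝ) (i k : Fin 4) : Rg x y i 0 k = 0 := by
  unfold Rg
  simp [pd_x_NB, pd_NB_col0, NB_col0, pd_const]

@[simp] lemma fin4ne_01 : ((0:Fin 4) = 1) = False := by decide
@[simp] lemma fin4ne_02 : ((0:Fin 4) = 2) = False := by decide
@[simp] lemma fin4ne_03 : ((0:Fin 4) = 3) = False := by decide
@[simp] lemma fin4ne_10 : ((1:Fin 4) = 0) = False := by decide
@[simp] lemma fin4ne_12 : ((1:Fin 4) = 2) = False := by decide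
@[simp] lemma fin4ne_13 : ((1:Fin 4) = 3) = False := by decide
@[simp] lemma fin4ne_20 : ((2:Fin 4) = 0) = False := by decide
@[simp] lemma fin4ne_21 : ((2:Fin 4) = 1) = False := by decide
@[simp] lemma fin4ne_23 : ((2:Fin 4) = 3) = False := by decide
@[simp] lemma fin4ne_30 : ((3:Fin 4) = 0) = False := by decide
@[simp] lemma fin4ne_31 : ((3:Fin 4) = 1) = False := by decide
@[simp] lemma fin4ne_32 : ((3:Fin 4) = 2) = False := by decide


lemma Rg_jj (x y : Fin 4 → ℝ) (i j : Fin 4) : Rg x y i j j = 0 := sub_self _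

lemma Rg313 (x y : Fin 4 → ℝ) :
    Rg x y 3 1 3 = -(3/16) * ((y 1)^3 + (y 2)^3 + (y 3)^3) / (y 1)^2 := by
  unfold Rg
  simp only [Fin.sum_univ_four, pd_NB33, pd_NB31, pd_x_NB]
  simp only [NB, Matrix.of_apply, Matrix.cons_val]
  norm_num [NB, Matrix.vecHead, Matrix.vecTail]
  rcases eq_or_ne (y 1) 0 with h | h
  · simp [h]
  · field_simp
    ring

lemma Rg323 (x y : Fin 4 → ℝ) :
    Rg x y 3 2 3 = (9/16) * (y 2)^2 / (y 1) := by
  unfold Rg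
  simp only [Fin.sum_univ_four, pd_NB33, pd_NB32, pd_x_NB]
  simp only [NB, Matrix.of_apply, Matrix.cons_val]
  norm_num [NB, Matrix.vecHead, Matrix.vecTail]
  rcases eq_or_ne (y 1) 0 with h | h
  · simp [h]
  · field_simp
    ring

lemma Rg213 (x y : Fin 4 → ℝ) : Rg x y 2 1 3 = 0 := by
  unfold Rg
  simp only [Fin.sum_univ_four, pd_NB21, pd_NB23, pd_x_NB]
  simp only [NB, Matrix.of_apply, Matrix.cons_val]
  norm_num [NB, Matrix.vecHead, Matrix.vecTail]

lemma Rg223 (x y : Fin 4 → ℝ) :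
    Rg x y 2 2 3 = -((9/16) * (y 3)^2 / (y 1)) := by
  unfold Rg
  simp only [Fin.sum_univ_four, pd_NB22, pd_NB23, pd_x_NB]
  simp only [NB, Matrix.of_apply, Matrix.cons_val]
  norm_num [NB, Matrix.vecHead, Matrix.vecTail]
  rcases eq_or_ne (y 1) 0 with h | h
  · simp [h]
  · field_simp
    ring

lemma Rg212 (x y : Fin 4 → ℝ) :
    Rg x y 2 1 2 = -(3/16) * ((y 1)^3 + (y 2)^3 + (y 3)^3) / (y 1)^2 := by
  unfold Rg
  simp only [Fin.sum_univ_four, pd_NB22, pd_NB21, pd_x_NB]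
  simp only [NB, Matrix.of_apply, Matrix.cons_val]
  norm_num [NB, Matrix.vecHead, Matrix.vecTail]
  rcases eq_or_ne (y 1) 0 with h | h
  · simp [h]
  · field_simp
    ring

lemma Rg232 (x y : Fin 4 → ℝ) :
    Rg x y 2 3 2 = (9/16) * (y 3)^2 / (y 1) := by
  unfold Rg
  simp only [Fin.sum_univ_four, pd_NB23, pd_NB22, pd_x_NB]
  simp only [NB, Matrix.of_apply, Matrix.cons_val]
  norm_num [NB, Matrix.vecHead, Matrix.vecTail]
  rcases eq_or_ne (y 1) 0 with h | h
  · simp [h]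
  · field_simp
    ring

lemma Rb_j0 (x y : Fin 4 → ℝ) (i h k : Fin 4) : Rb x y i h 0 k = 0 := by
  unfold Rb
  have hh : (fun y' : Fin 4 → ℝ => Rg x y' i 0 k) = fun _ => (0:ℝ) := by
    funext y'; exact Rg_j0 x y' i k
  rw [hh]; exact pd_const _ _ _

lemma Rb_jj (x y : Fin 4 → ℝ) (i h j : Fin 4) : Rb x y i h j j = 0 := by
  unfold Rb
  have hh : (fun y' : Fin 4 → ℝ => Rg x y' i j j) = fun _ => (0:ℝ) := by
    funext y'; exact Rg_jj x y' i j
  rw [hh]; exact pd_const _ _ _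

lemma Rb3313 (x y : Fin 4 → ℝ) :
    Rb x y 3 3 1 3 = -(9/16) * (y 3)^2 / (y 1)^2 := by
  unfold Rb pd
  have hh : (fun t => Rg x (Function.update y 3 t) 3 1 3)
      = fun t => (((y 1)^3 + (y 2)^3) + t^3) * (-(3/16) / (y 1)^2) := by
    funext t; rw [Rg313]; norm_num [Function.update_apply]; ring
  rw [hh, (((hasDerivAt_pow 3 (y 3)).const_add ((y 1)^3 + (y 2)^3)).mul_const
      (-(3/16) / (y 1)^2)).deriv]
  push_cast; ring

lemma Rb3323 (x y : Fin 4 → ℝ) : Rb x y 3 3 2 3 = 0 := by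
  unfold Rb pd
  have hh : (fun t => Rg x (Function.update y 3 t) 3 2 3)
      = fun _ => (9/16) * (y 2)^2 / (y 1) := by
    funext t; rw [Rg323]; norm_num [Function.update_apply]
  rw [hh]; exact deriv_const _ _

lemma Rb2113 (x y : Fin 4 → ℝ) : Rb x y 2 1 1 3 = 0 := by
  unfold Rb pd
  have hh : (fun t => Rg x (Function.update y 1 t) 2 1 3) = fun _ => (0:ℝ) := by
    funext t; rw [Rg213]
  rw [hh]; exact deriv_const _ _

lemma Rb2123 (x y : Fin 4 → ℝ) (h1 : y 1 ≠ 0) :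
    Rb x y 2 1 2 3 = (9/16) * (y 3)^2 / (y 1)^2 := by
  unfold Rb pd
  have hh : (fun t => Rg x (Function.update y 1 t) 2 2 3)
      = fun t => (-((9:ℝ)/16 * (y 3)^2)) * t⁻¹ := by
    funext t; rw [Rg223]; norm_num [Function.update_apply]; ring
  rw [hh, ((hasDerivAt_inv h1).const_mul (-((9:ℝ)/16 * (y 3)^2))).deriv]
  ring

lemma Rb2312 (x y : Fin 4 → ℝ) :
    Rb x y 2 3 1 2 = -(9/16) * (y 3)^2 / (y 1)^2 := by
  unfold Rb pd
  have hh : (fun t => Rg x (Function.update y 3 t) 2 1 2)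
      = fun t => (((y 1)^3 + (y 2)^3) + t^3) * (-(3/16) / (y 1)^2) := by
    funext t; rw [Rg212]; norm_num [Function.update_apply]; ring
  rw [hh, (((hasDerivAt_pow 3 (y 3)).const_add ((y 1)^3 + (y 2)^3)).mul_const
      (-(3/16) / (y 1)^2)).deriv]
  push_cast; ring

lemma Rb2332 (x y : Fin 4 → ℝ) :
    Rb x y 2 3 3 2 = (9/8) * (y 3) / (y 1) := by
  unfold Rb pd
  have hh : (fun t => Rg x (Function.update y 3 t) 2 3 2)
      = fun t => t^2 * ((9:ℝ)/16 / (y 1)) := by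
    funext t; rw [Rg232]; norm_num [Function.update_apply]; ring
  rw [hh, ((hasDerivAt_pow 2 (y 3)).mul_const ((9:ℝ)/16 / (y 1))).deriv]
  push_cast; ring


/-- for `F² = e^{−x2} y1 (y2³+y3³+y4³)^{1/3}` on `{y2 ≠ 0, y4 ≠ 0}`, a
horizontal vector `W = W^i h_i` satisfies `W^j R̊^i_{hjk} = 0` for all `h,i,k` iff
`W² = W³ = W⁴ = 0`; i.e., the nullity space `N_{R̊}` is exactly the span of `h₁`. -/
theorem statement12 :
    ∀ x y : Fin 4 → ℝ, U x y → ∀ W : Fin 4 → ℝ,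
      (∀ i h k : Fin 4, (∑ j, W j * Rb x y i h j k) = 0) ↔
        (W 1 = 0 ∧ W 2 = 0 ∧ W 3 = 0) := by
  intro x y hU W
  obtain ⟨h1, h3⟩ := hU
  have hc2 : (y 3)^2 / (y 1)^2 ≠ 0 := by positivity
  constructor
  · intro H
    have hA := H 3 3 3
    rw [Fin.sum_univ_four, Rb_j0, Rb3313, Rb3323, Rb_jj] at hA
    have hW1 : W 1 = 0 := by
      have : W 1 * (-(9/16) * (y 3)^2 / (y 1)^2) = 0 := by linarith [hA]
      rcases mul_eq_zero.1 this with h | h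
      · exact h
      · exfalso; apply hc2; field_simp at h ⊢ <;> linarith
    have hB := H 2 1 3
    rw [Fin.sum_univ_four, Rb_j0, Rb2113, Rb2123 x y h1, Rb_jj] at hB
    have hW2 : W 2 = 0 := by
      have : W 2 * ((9/16) * (y 3)^2 / (y 1)^2) = 0 := by linarith [hB]
      rcases mul_eq_zero.1 this with h | h
      · exact h
      · exfalso; apply hc2; field_simp at h ⊢ <;> linarith
    have hC := H 2 3 2
    rw [Fin.sum_univ_four, Rb_j0, Rb2312, Rb_jj, Rb2332] at hC
    have hW3 : W 3 = 0 := by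
      rw [hW1] at hC
      have : W 3 * ((9/8) * (y 3) / (y 1)) = 0 := by linarith [hC]
      rcases mul_eq_zero.1 this with h | h
      · exact h
      · exfalso
        have : (9:ℝ)/8 * y 3 / y 1 ≠ 0 := by
          apply div_ne_zero _ h1
          exact mul_ne_zero (by norm_num) h3
        exact this h
    exact ⟨hW1, hW2, hW3⟩
  · rintro ⟨hW1, hW2, hW3⟩ i h k
    rw [Fin.sum_univ_four, hW1, hW2, hW3, Rb_j0]
    ring
end

section
/- For the Finsler space with F² = e^{−x2} y1 (y2³+y3³+y4³)^{1/3} on {y2 ≠ 0, y4 ≠ 0, y2³+y3³+y4³ = 0}, the nullity distribution N_ℜ of the Barthel curvature (spanned by h₁, h₂) strictly contains the nullity distribution N_{R̊} of the Berwald h-curvature (spanned by h₁); in particular h₂ ∈ N_ℜ but h₂ ∉ N_{R̊}, so N_ℜ is not contained in N_{R̊}. -/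
open scoped BigOperators

noncomputable def DN (y : Fin 4 → ℝ) (i j m : Fin 4) : ℝ :=
  (![(0 : Matrix (Fin 4) (Fin 4) ℝ),
     !![0, 0, 0, 0;
        0, -1 + ((y 2) ^ 3 + (y 3) ^ 3) / (2 * (y 1) ^ 3),
          -(3 * (y 2) ^ 2) / (4 * (y 1) ^ 2), -(3 * (y 3) ^ 2) / (4 * (y 1) ^ 2);
        0, -(3 * (y 2) ^ 2) / (4 * (y 1) ^ 2), 3 * (y 2) / (2 * (y 1)), 0;
        0, -(3 * (y 3) ^ 2) / (4 * (y 1) ^ 2), 0, 3 * (y 3) / (2 * (y 1))],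
     !![0, 0, 0, 0; 0, 0, -(3/4), 0; 0, -(3/4), 0, 0; 0, 0, 0, 0],
     !![0, 0, 0, 0; 0, 0, 0, -(3/4); 0, 0, 0, 0; 0, -(3/4), 0, 0]] i) j m

lemma deriv_hmul34 (b : ℝ) : deriv (HMul.hMul (3/4 : ℝ)) b = 3/4 := by
  have h : (HMul.hMul (3/4 : ℝ)) = fun t : ℝ => (3/4 : ℝ) * t := rfl
  rw [h, deriv_const_mul_field']; simp

set_option maxHeartbeats 2000000 in
lemma pdNB (x y : Fin 4 → ℝ) (hy : y 1 ≠ 0) (i j m : Fin 4) :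
    pd (fun y' => NB x y' i j) m y = DN y i j m := by
  fin_cases i <;> fin_cases j <;> fin_cases m
  all_goals try (simp [pd, NB, DN, Function.update, Matrix.vecHead, Matrix.vecTail,
    deriv_const_mul_field', deriv_id'', div_eq_mul_inv, deriv_inv])
  all_goals try (norm_num [deriv_hmul34])
  all_goals try (field_simp; ring)
  all_goals try (rw [(show HasDerivAt (fun t : ℝ => y 3 ^ 3 * t⁻¹ ^ 2 * (-1 / 4) + y 2 ^ 3 * t⁻¹ ^ 2 * (-1 / 4)
      - t ^ 3 * t⁻¹ ^ 2) _ (y 1) from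
    (((((hasDerivAt_inv hy).pow 2).const_mul (y 3 ^ 3)).mul_const (-1 / 4)).add
    ((((hasDerivAt_inv hy).pow 2).const_mul (y 2 ^ 3)).mul_const (-1 / 4))).sub
    ((hasDerivAt_pow 3 (y 1)).mul ((hasDerivAt_inv hy).pow 2))).deriv]; norm_num; field_simp; ring)
  all_goals try ring
  all_goals tauto


noncomputable def RG (y : Fin 4 → ℝ) (i j k : Fin 4) : ℝ :=
  (![(0 : Matrix (Fin 4) (Fin 4) ℝ),
     !![0, 0, 0, 0;
        0, 0, 3/16 * (y 2)^2 * ((y 1)^3 + (y 2)^3 + (y 3)^3) / (y 1)^4,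
          3/16 * (y 3)^2 * ((y 1)^3 + (y 2)^3 + (y 3)^3) / (y 1)^4;
        0, -(3/16 * (y 2)^2 * ((y 1)^3 + (y 2)^3 + (y 3)^3) / (y 1)^4), 0, 0;
        0, -(3/16 * (y 3)^2 * ((y 1)^3 + (y 2)^3 + (y 3)^3) / (y 1)^4), 0, 0],
     !![0, 0, 0, 0;
        0, 0, -(3/16 * ((y 1)^3 + (y 2)^3 + (y 3)^3) / (y 1)^2), 0;
        0, 3/16 * ((y 1)^3 + (y 2)^3 + (y 3)^3) / (y 1)^2, 0, -(9/16 * (y 3)^2 / (y 1));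
        0, 0, 9/16 * (y 3)^2 / (y 1), 0],
     !![0, 0, 0, 0;
        0, 0, 0, -(3/16 * ((y 1)^3 + (y 2)^3 + (y 3)^3) / (y 1)^2);
        0, 0, 0, 9/16 * (y 2)^2 / (y 1);
        0, 3/16 * ((y 1)^3 + (y 2)^3 + (y 3)^3) / (y 1)^2, -(9/16 * (y 2)^2 / (y 1)), 0]] i) j k

set_option maxHeartbeats 4000000 in
lemma Rg_eq (x y : Fin 4 → ℝ) (hy : y 1 ≠ 0) (i j k : Fin 4) : Rg x y i j k = RG y i j k := by
  have hx : ∀ i j k : Fin 4, pd (fun x' => NB x' y i k) j x = 0 := by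
    intro i j k
    rw [pd]
    exact deriv_const (x j) (NB x y i k)
  simp only [Rg, hx, pdNB x y hy, Fin.sum_univ_four]
  fin_cases i <;> fin_cases j <;> fin_cases k
  all_goals try (simp [DN, NB, RG, Matrix.vecHead, Matrix.vecTail])
  all_goals try (field_simp; ring)
open Topology in
lemma pd_Rg (x y : Fin 4 → ℝ) (hy : y 1 ≠ 0) (i j k h : Fin 4) :
    Rb x y i h j k = deriv (fun t => RG (Function.update y h t) i j k) (y h) := by
  rw [Rb, pd]
  apply Filter.EventuallyEq.deriv_eq
  have hev : ∀ᶠ t in 𝓝 (y h), Function.update y h t 1 ≠ 0 := by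
    by_cases hh : h = 1
    · subst hh
      filter_upwards [eventually_ne_nhds hy] with t ht
      simpa using ht
    · filter_upwards with t
      rw [Function.update_of_ne (Ne.symm hh)]
      exact hy
  filter_upwards [hev] with t ht
  exact Rg_eq x _ ht i j k

lemma RbA (x y : Fin 4 → ℝ) (hy : y 1 ≠ 0) :
    ∀ j : Fin 4, Rb x y 2 3 j 3 = ![0, 0, -(9/8 * (y 3) / (y 1)), 0] j := by
  intro j
  fin_cases j <;> rw [pd_Rg x y hy]
  all_goals simp [RG, Function.update, Matrix.vecHead, Matrix.vecTail, div_eq_mul_inv,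
    deriv_inv, deriv_const_mul_field', deriv_id'']
  all_goals try (field_simp; ring)
  all_goals try tauto

lemma RbB (x y : Fin 4 → ℝ) (hy : y 1 ≠ 0)
    (hT : (y 1)^3 + (y 2)^3 + (y 3)^3 = 0) :
    ∀ j : Fin 4, Rb x y 3 1 j 3 = ![0, -(9/16), -(9/16 * (y 2)^2 / (y 1)^2), 0] j := by
  have hS : (y 2)^3 = -(y 1)^3 - (y 3)^3 := by linarith
  intro j
  fin_cases j <;> rw [pd_Rg x y hy]
  all_goals simp [RG, Function.update, Matrix.vecHead, Matrix.vecTail, div_eq_mul_inv,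
    deriv_inv, deriv_const_mul_field', deriv_id'']
  all_goals try (rw [hS])
  all_goals try (field_simp; ring)
  all_goals try tauto
  all_goals rw [(show HasDerivAt (fun t : ℝ => t ^ 3 * t⁻¹ ^ 2 * (3 / 16) + y 1 ^ 3 * t⁻¹ ^ 2 * (-3 / 16))
      _ (y 1) from
    (((hasDerivAt_pow 3 (y 1)).mul ((hasDerivAt_inv hy).pow 2)).mul_const (3 / 16)).add
    ((((hasDerivAt_inv hy).pow 2).const_mul (y 1 ^ 3)).mul_const (-3 / 16))).deriv]
  all_goals norm_num; field_simp; ring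

lemma RbC (x y : Fin 4 → ℝ) (hy : y 1 ≠ 0)
    (hT : (y 1)^3 + (y 2)^3 + (y 3)^3 = 0) :
    ∀ j : Fin 4, Rb x y 2 1 j 2 = ![0, -(9/16), 0, -(9/16 * (y 3)^2 / (y 1)^2)] j := by
  have hS : (y 2)^3 = -(y 1)^3 - (y 3)^3 := by linarith
  intro j
  fin_cases j <;> rw [pd_Rg x y hy]
  all_goals simp [RG, Function.update, Matrix.vecHead, Matrix.vecTail, div_eq_mul_inv,
    deriv_inv, deriv_const_mul_field', deriv_id'']
  all_goals try (rw [hS])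
  all_goals try (field_simp; ring)
  all_goals try tauto
  all_goals rw [(show HasDerivAt (fun t : ℝ => t ^ 3 * t⁻¹ ^ 2 * (3 / 16) + y 1 ^ 3 * t⁻¹ ^ 2 * (-3 / 16))
      _ (y 1) from
    (((hasDerivAt_pow 3 (y 1)).mul ((hasDerivAt_inv hy).pow 2)).mul_const (3 / 16)).add
    ((((hasDerivAt_inv hy).pow 2).const_mul (y 1 ^ 3)).mul_const (-3 / 16))).deriv]
  all_goals norm_num; field_simp; ring
lemma RgC (x y : Fin 4 → ℝ) (hy : y 1 ≠ 0) (hT : (y 1)^3 + (y 2)^3 + (y 3)^3 = 0)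
    (i j : Fin 4) : Rg x y i j 0 = 0 ∧ Rg x y i j 1 = 0 := by
  have hS : (y 2)^3 = -(y 1)^3 - (y 3)^3 := by linarith
  constructor <;> rw [Rg_eq x y hy] <;> fin_cases i <;> fin_cases j <;>
      simp [RG, Matrix.vecHead, Matrix.vecTail] <;> try rw [hS] <;> try ring <;> try tauto

/-- on `{y2 ≠ 0, y4 ≠ 0, y2³+y3³+y4³ = 0}`, the nullity space of the Barthel
curvature `ℜ` strictly contains the nullity space of the Berwald h-curvature `R̊`; in
particular `h₂` lies in `N_ℜ` but not in `N_{R̊}`, so `N_ℜ` is not contained in `N_{R̊}`. -/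
theorem statement13 :
    ∀ x y : Fin 4 → ℝ, U x y → (y 1) ^ 3 + (y 2) ^ 3 + (y 3) ^ 3 = 0 →
      ({W : Fin 4 → ℝ | ∀ i h k : Fin 4, (∑ j, W j * Rb x y i h j k) = 0} ⊂
          {Z : Fin 4 → ℝ | ∀ i j : Fin 4, (∑ k, Z k * Rg x y i j k) = 0}) ∧
      (Pi.single 1 1 : Fin 4 → ℝ) ∈
        {Z : Fin 4 → ℝ | ∀ i j : Fin 4, (∑ k, Z k * Rg x y i j k) = 0} ∧
      (Pi.single 1 1 : Fin 4 → ℝ) ∉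
        {W : Fin 4 → ℝ | ∀ i h k : Fin 4, (∑ j, W j * Rb x y i h j k) = 0} := by
  intro x y hU hT
  obtain ⟨hy1, hy3⟩ := hU
  -- membership criterion for the Barthel nullity set
  have hB : ∀ W : Fin 4 → ℝ, W 2 = 0 → W 3 = 0 →
      W ∈ {Z : Fin 4 → ℝ | ∀ i j : Fin 4, (∑ k, Z k * Rg x y i j k) = 0} := by
    intro W h2 h3 i j
    obtain ⟨h0, h1⟩ := RgC x y hy1 hT i j
    rw [Fin.sum_univ_four, h0, h1, h2, h3]; ring
  have hmemB : (Pi.single 1 1 : Fin 4 → ℝ) ∈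
      {Z : Fin 4 → ℝ | ∀ i j : Fin 4, (∑ k, Z k * Rg x y i j k) = 0} := by
    apply hB <;> simp
  have hmemA : (Pi.single 1 1 : Fin 4 → ℝ) ∉
      {W : Fin 4 → ℝ | ∀ i h k : Fin 4, (∑ j, W j * Rb x y i h j k) = 0} := by
    intro hmem
    have h := hmem 3 1 3
    simp [Fin.sum_univ_four, RbB x y hy1 hT, Matrix.vecHead, Matrix.vecTail,
      Pi.single_apply] at h
  have hsub : {W : Fin 4 → ℝ | ∀ i h k : Fin 4, (∑ j, W j * Rb x y i h j k) = 0} ⊆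
      {Z : Fin 4 → ℝ | ∀ i j : Fin 4, (∑ k, Z k * Rg x y i j k) = 0} := by
    intro W hW
    have e1 := hW 2 3 3
    simp [Fin.sum_univ_four, RbA x y hy1, Matrix.vecHead, Matrix.vecTail, hy1, hy3] at e1
    have e2 := hW 3 1 3
    simp [Fin.sum_univ_four, RbB x y hy1 hT, Matrix.vecHead, Matrix.vecTail, hy1, hy3, e1] at e2
    have e3 := hW 2 1 2
    simp [Fin.sum_univ_four, RbC x y hy1 hT, Matrix.vecHead, Matrix.vecTail, hy1, hy3, e2] at e3
    exact hB W e1 e3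
  exact ⟨ssubset_iff_subset_not_subset.mpr ⟨hsub, fun hcon => hmemA (hcon hmemB)⟩,
    hmemB, hmemA⟩
end
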